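/- Let H : V → B(H) be defined by H(ω) = A(ω) − s₀ Γ(ω) D(ω) where A(ω) is invertible with A(ω)⁻¹ having a simple pole structure such that D(ω) A(ω)⁻¹ Γ(ω) = t(ω)/(ω − ω₀) + r(ω) with t, r holomorphic at ω₀, t(ω₀) ≠ 0, and s₀ a constant with 1/s₀ ≠ r(ω₀). Then ω near ω₀ is a characteristic value of H if and only if (ω − ω₀)(1 − s₀ r(ω)) − s₀ t(ω) = 0, and to leading order the characteristic value satisfies ω − ω₀ = t(ω₀)/(1/s₀ − r(ω₀)) + higher order corrections. -/

import Mathlib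

open ContinuousLinearMap

/-- Characteristic values of the rank-one perturbation `H(ω) = A(ω) − s₀ Γ(ω) D(ω)`:
with `D(ω) A(ω)⁻¹ Γ(ω) = t(ω)/(ω−ω₀) + r(ω)`, `t, r` holomorphic at `ω₀`, `t(ω₀) ≠ 0`,
`1/s₀ ≠ r(ω₀)`, then for `ω` near `ω₀`, `ω` is a characteristic value of `H` iff
`(ω−ω₀)(1 − s₀ r(ω)) − s₀ t(ω) = 0`, in which case `ω − ω₀ = t(ω)/(1/s₀ − r(ω))`. -/
theorem stmt15 {H : Type*} [NormedAddCommGroup H] [InnerProductSpace ℂ H] [CompleteSpace H]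
    (V : Set ℂ) (hV : IsOpen V) (ω₀ : ℂ) (hω₀ : ω₀ ∈ V)
    (A Ainv : ℂ → H →L[ℂ] H) (Γ : ℂ → H) (D : ℂ → H →L[ℂ] ℂ) (s₀ : ℂ) (t r : ℂ → ℂ)
    (hinv : ∀ ω ∈ V, A ω ∘L Ainv ω = ContinuousLinearMap.id ℂ H ∧
      Ainv ω ∘L A ω = ContinuousLinearMap.id ℂ H)
    (hΓ : ∀ ω ∈ V, Γ ω ≠ 0)
    (hDAΓ : ∀ ω ∈ V, ω ≠ ω₀ → D ω (Ainv ω (Γ ω)) = t ω / (ω - ω₀) + r ω)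
    (ht : AnalyticAt ℂ t ω₀) (hr : AnalyticAt ℂ r ω₀)
    (ht0 : t ω₀ ≠ 0) (hs0 : s₀ ≠ 0) (hsr : 1 / s₀ ≠ r ω₀) :
    ∃ δ > 0, ∀ ω ∈ V, ω ≠ ω₀ → ‖ω - ω₀‖ < δ →
      (((∃ φ : H, φ ≠ 0 ∧ A ω φ - (s₀ * D ω φ) • Γ ω = 0) ↔
          (ω - ω₀) * (1 - s₀ * r ω) - s₀ * t ω = 0) ∧
        ((∃ φ : H, φ ≠ 0 ∧ A ω φ - (s₀ * D ω φ) • Γ ω = 0) →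
          ω - ω₀ = t ω / (1 / s₀ - r ω))) := by
  have hε : (0 : ℝ) < ‖1 / s₀ - r ω₀‖ := by
    rw [norm_pos_iff]
    exact sub_ne_zero.mpr hsr
  obtain ⟨δ, hδ, hδr⟩ := Metric.continuousAt_iff.mp hr.continuousAt _ hε
  refine ⟨δ, hδ, fun ω hωV hωne hωδ => ?_⟩
  have hrω : 1 / s₀ - r ω ≠ 0 := by
    intro h
    have h1 : r ω = 1 / s₀ := by linear_combination -h
    have := hδr (by rwa [Complex.dist_eq])
    rw [Complex.dist_eq, h1] at this
    exact lt_irrefl _ this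
  have hc : ω - ω₀ ≠ 0 := sub_ne_zero.mpr hωne
  have hD := hDAΓ ω hωV hωne
  have hAAi := (hinv ω hωV).1
  have hAiA := (hinv ω hωV).2
  have key : (∃ φ : H, φ ≠ 0 ∧ A ω φ - (s₀ * D ω φ) • Γ ω = 0) ↔
      (ω - ω₀) * (1 - s₀ * r ω) - s₀ * t ω = 0 := by
    constructor
    · rintro ⟨φ, hφ0, hφ⟩
      have hAφ : A ω φ = (s₀ * D ω φ) • Γ ω := by linear_combination (norm := abel) hφ
      have hφeq : φ = (s₀ * D ω φ) • Ainv ω (Γ ω) := by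
        have := congrArg (Ainv ω) hAφ
        rwa [map_smul, show Ainv ω (A ω φ) = φ from congrFun (congrArg DFunLike.coe hAiA) φ]
          at this
      have hDφ : D ω φ = (s₀ * D ω φ) * (t ω / (ω - ω₀) + r ω) := by
        conv_lhs => rw [hφeq]
        rw [map_smul, smul_eq_mul, hD]
      have hDφ0 : D ω φ ≠ 0 := by
        intro h
        rw [h, mul_zero, zero_smul] at hφeq
        exact hφ0 hφeq
      have h1 : (ω - ω₀) = s₀ * (t ω + r ω * (ω - ω₀)) := by
        have hDφ' : D ω φ * (ω - ω₀) = D ω φ * (s₀ * (t ω + r ω * (ω - ω₀))) := by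
          field_simp at hDφ
          linear_combination D ω φ * hDφ
        exact mul_left_cancel₀ hDφ0 hDφ'
      linear_combination h1
    · intro heq
      refine ⟨Ainv ω (Γ ω), ?_, ?_⟩
      · intro h
        have : A ω (Ainv ω (Γ ω)) = Γ ω := congrFun (congrArg DFunLike.coe hAAi) (Γ ω)
        rw [h, map_zero] at this
        exact hΓ ω hωV this.symm
      · have hA : A ω (Ainv ω (Γ ω)) = Γ ω := congrFun (congrArg DFunLike.coe hAAi) (Γ ω)
        rw [hA, hD]
        have : s₀ * (t ω / (ω - ω₀) + r ω) = 1 := by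
          rw [div_add' _ _ _ hc, ← mul_div_assoc, div_eq_one_iff_eq hc]
          linear_combination -heq
        rw [this, one_smul, sub_self]
  refine ⟨key, fun hex => ?_⟩
  have heq := key.mp hex
  have h1 : (ω - ω₀) * (s₀ * (1 / s₀ - r ω)) = s₀ * t ω := by
    have : s₀ * (1 / s₀ - r ω) = 1 - s₀ * r ω := by field_simp
    rw [this]; linear_combination heq
  have h2 : s₀ * ((ω - ω₀) * (1 / s₀ - r ω)) = s₀ * t ω := by linear_combination h1
  rw [eq_div_iff hrω]
  exact mul_left_cancel₀ hs0 h2
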